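/- Sewing lemma with a control: Let E be a Banach space, ω a control on [0,1], θ > 1 and c₁ > 0, and let μ = (μ_{ts})_{0 ≤ s ≤ t ≤ 1} be a family of elements of E such that ‖μ_{ts} − (μ_{tu} + μ_{us})‖ ≤ c₁ ω(s,t)^θ for all 0 ≤ s ≤ u ≤ t ≤ 1. Then there exists a constant C (depending only on c₁ and θ) and a unique function φ : [0,1] → E with φ₀ = 0 such that ‖φ_t − φ_s − μ_{ts}‖ ≤ C ω(s,t)^θ for all 0 ≤ s ≤ t ≤ 1; uniqueness means that any two functions vanishing at 0 and satisfying such a bound (with possibly different constants) coincide. -/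

import Mathlib

open Finset Filter

namespace SewingAux

variable {E : Type*} [NormedAddCommGroup E]

lemma omega_mono (ω : ℝ → ℝ → ℝ)
    (hn : ∀ s t : ℝ, 0 ≤ s → s ≤ t → t ≤ 1 → 0 ≤ ω s t)
    (hsuper : ∀ s u t : ℝ, 0 ≤ s → s ≤ u → u ≤ t → t ≤ 1 → ω s u + ω u t ≤ ω s t)
    {s' s t t' : ℝ} (h0 : 0 ≤ s') (h1 : s' ≤ s) (h2 : s ≤ t) (h3 : t ≤ t') (h4 : t' ≤ 1) :
    ω s t ≤ ω s' t' := by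
  have A := hsuper s' s t' h0 h1 (h2.trans h3) h4
  have B := hsuper s t t' (h0.trans h1) h2 h3 h4
  have C := hn s' s h0 h1 (h2.trans (h3.trans h4))
  have D := hn t t' (h0.trans (h1.trans h2)) h3 h4
  linarith

lemma chain (ω : ℝ → ℝ → ℝ)
    (hn : ∀ s t : ℝ, 0 ≤ s → s ≤ t → t ≤ 1 → 0 ≤ ω s t)
    (hsuper : ∀ s u t : ℝ, 0 ≤ s → s ≤ u → u ≤ t → t ≤ 1 → ω s u + ω u t ≤ ω s t) :
    ∀ (N : ℕ) (q : ℕ → ℝ), Monotone q → 0 ≤ q 0 → q N ≤ 1 →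
      ∑ i ∈ range N, ω (q i) (q (i + 1)) ≤ ω (q 0) (q N) := by
  intro N
  induction N with
  | zero => intro q hq h0 h1; simpa using hn (q 0) (q 0) h0 le_rfl h1
  | succ N ih =>
    intro q hq h0 h1
    rw [Finset.sum_range_succ]
    have hN1 : q N ≤ 1 := (hq (Nat.le_succ N)).trans h1
    have hA := ih q hq h0 hN1
    have hB := hsuper (q 0) (q N) (q (N + 1)) h0 (hq (Nat.zero_le N)) (hq (Nat.le_succ N)) h1
    linarith

lemma sum_even_odd (g : ℕ → ℝ) : ∀ N : ℕ, ∑ j ∈ range N, g j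
    = (∑ k ∈ range ((N + 1) / 2), g (2 * k)) + ∑ k ∈ range (N / 2), g (2 * k + 1) := by
  intro N
  induction N with
  | zero => simp
  | succ N ih =>
    rw [Finset.sum_range_succ, ih]
    rcases Nat.even_or_odd N with ⟨k, hk⟩ | ⟨k, hk⟩
    · subst hk
      have e1 : (k + k + 1 + 1) / 2 = ((k + k + 1) / 2) + 1 := by omega
      have e2 : (k + k + 1) / 2 = (k + k) / 2 := by omega
      rw [e1, e2, Finset.sum_range_succ]
      have e3 : 2 * ((k + k) / 2) = k + k := by omega
      rw [e3]
      ring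
    · subst hk
      have e1 : (2 * k + 1 + 1 + 1) / 2 = (2 * k + 1 + 1) / 2 := by omega
      have e2 : (2 * k + 1 + 1) / 2 = ((2 * k + 1) / 2) + 1 := by omega
      rw [e1, e2, Finset.sum_range_succ (fun j => g (2 * j + 1))]
      have e3 : 2 * ((2 * k + 1) / 2) + 1 = 2 * k + 1 := by omega
      rw [e3]
      ring

lemma exists_small (ω : ℝ → ℝ → ℝ)
    (hn : ∀ s t : ℝ, 0 ≤ s → s ≤ t → t ≤ 1 → 0 ≤ ω s t)
    (hsuper : ∀ s u t : ℝ, 0 ≤ s → s ≤ u → u ≤ t → t ≤ 1 → ω s u + ω u t ≤ ω s t)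
    (N : ℕ) (hN : 1 ≤ N) (q : ℕ → ℝ) (hq : Monotone q)
    (h0 : 0 ≤ q 0) (h1 : q (N + 1) ≤ 1) :
    ∃ j < N, ω (q j) (q (j + 2)) ≤ 2 * ω (q 0) (q (N + 1)) / N := by
  set W := ω (q 0) (q (N + 1)) with hW
  have key : ∑ j ∈ range N, ω (q j) (q (j + 2)) ≤ 2 * W := by
    rw [sum_even_odd (fun j => ω (q j) (q (j + 2))) N]
    have heven : (∑ k ∈ range ((N + 1) / 2), ω (q (2 * k)) (q (2 * k + 2))) ≤ W := by
      have hmono : Monotone (fun k => q (2 * k)) :=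
        hq.comp (fun a b hab => by omega)
      have hend : q (2 * ((N + 1) / 2)) ≤ 1 := (hq (by omega : 2 * ((N + 1) / 2) ≤ N + 1)).trans h1
      have := chain ω hn hsuper ((N + 1) / 2) (fun k => q (2 * k)) hmono (by simpa using h0)
        (by simpa using hend)
      have hre : ∀ S : Finset ℕ, ∑ k ∈ S, ω (q (2 * k)) (q (2 * (k + 1)))
          = ∑ k ∈ S, ω (q (2 * k)) (q (2 * k + 2)) := by
        intro S; apply Finset.sum_congr rfl; intro i _
        have e : 2 * (i + 1) = 2 * i + 2 := by ring
        rw [e]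
      rw [hre] at this
      refine this.trans ?_
      exact omega_mono ω hn hsuper h0 le_rfl (hq (by omega)) (hq (by omega)) h1
    have hodd : (∑ k ∈ range (N / 2), ω (q (2 * k + 1)) (q (2 * k + 1 + 2))) ≤ W := by
      have hmono : Monotone (fun k => q (2 * k + 1)) :=
        hq.comp (fun a b hab => by omega)
      have hend : q (2 * (N / 2) + 1) ≤ 1 := (hq (by omega : 2 * (N / 2) + 1 ≤ N + 1)).trans h1
      have := chain ω hn hsuper (N / 2) (fun k => q (2 * k + 1)) hmono
        (h0.trans (hq (by omega))) (by simpa using hend)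
      have hre : ∀ S : Finset ℕ, ∑ k ∈ S, ω (q (2 * k + 1)) (q (2 * (k + 1) + 1))
          = ∑ k ∈ S, ω (q (2 * k + 1)) (q (2 * k + 1 + 2)) := by
        intro S; apply Finset.sum_congr rfl; intro i _
        have e : 2 * (i + 1) = 2 * i + 2 := by ring
        rw [e]
      rw [hre] at this
      refine this.trans ?_
      exact omega_mono ω hn hsuper h0 (hq (by omega)) (hq (by omega)) (hq (by omega)) h1
    calc _ ≤ W + W := add_le_add heven hodd
    _ = 2 * W := by ring
  by_contra hcon
  push_neg at hcon
  have hlt : ∑ j ∈ range N, (2 * W / N) < ∑ j ∈ range N, ω (q j) (q (j + 2)) := by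
    apply Finset.sum_lt_sum_of_nonempty
    · exact Finset.nonempty_range_iff.mpr (by omega)
    · intro j hj; exact hcon j (Finset.mem_range.mp hj)
  rw [Finset.sum_const, Finset.card_range, nsmul_eq_mul] at hlt
  have hNne : (N : ℝ) ≠ 0 := by positivity
  have he : (N : ℝ) * (2 * W / N) = 2 * W := by field_simp
  rw [he] at hlt
  linarith

end SewingAux

namespace SewingAux2

variable {E : Type*} [NormedAddCommGroup E]

lemma sum_remove (μ : ℝ → ℝ → E) (q q' : ℕ → ℝ) (N j₀ : ℕ) (hj : j₀ < N)
    (hq' : ∀ k, q' k = if k < j₀ + 1 then q k else q (k + 1)) :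
    ∑ i ∈ range (N + 1), μ (q (i + 1)) (q i)
      = (∑ i ∈ range N, μ (q' (i + 1)) (q' i))
        + (μ (q (j₀ + 2)) (q (j₀ + 1)) + μ (q (j₀ + 1)) (q j₀) - μ (q (j₀ + 2)) (q j₀)) := by
  have L : ∑ i ∈ range (N + 1), μ (q (i + 1)) (q i)
      = (∑ i ∈ Ico 0 j₀, μ (q (i + 1)) (q i)) + (μ (q (j₀ + 1)) (q j₀)
        + (μ (q (j₀ + 2)) (q (j₀ + 1)) + ∑ i ∈ Ico (j₀ + 2) (N + 1), μ (q (i + 1)) (q i))) := by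
    rw [Finset.range_eq_Ico,
      ← Finset.sum_Ico_consecutive _ (Nat.zero_le j₀) (by omega : j₀ ≤ N + 1),
      Finset.sum_eq_sum_Ico_succ_bot (by omega : j₀ < N + 1),
      Finset.sum_eq_sum_Ico_succ_bot (by omega : j₀ + 1 < N + 1)]
  have R : ∑ i ∈ range N, μ (q' (i + 1)) (q' i)
      = (∑ i ∈ Ico 0 j₀, μ (q (i + 1)) (q i))
        + (μ (q (j₀ + 2)) (q j₀) + ∑ i ∈ Ico (j₀ + 2) (N + 1), μ (q (i + 1)) (q i)) := by
    rw [Finset.range_eq_Ico,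
      ← Finset.sum_Ico_consecutive _ (Nat.zero_le j₀) (by omega : j₀ ≤ N),
      Finset.sum_eq_sum_Ico_succ_bot (hj)]
    congr 1
    · apply Finset.sum_congr rfl
      intro i hi
      have hilt : i < j₀ := (Finset.mem_Ico.mp hi).2
      rw [hq', hq', if_pos (by omega), if_pos (by omega)]
    congr 1
    · rw [hq', hq', if_neg (show ¬ (j₀ + 1 < j₀ + 1) by omega), if_pos (show j₀ < j₀ + 1 by omega)]
    · rw [Finset.sum_Ico_eq_sum_range, Finset.sum_Ico_eq_sum_range]
      have hcard : N - (j₀ + 1) = N + 1 - (j₀ + 2) := by omega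
      rw [hcard]
      apply Finset.sum_congr rfl
      intro i _
      rw [hq', hq', if_neg (by omega), if_neg (by omega)]
      congr 2 <;> omega
  rw [L, R]
  abel

lemma young (θ c₁ : ℝ) (hθ : 1 < θ) (hc₁ : 0 < c₁) (ω : ℝ → ℝ → ℝ)
    (hn : ∀ s t : ℝ, 0 ≤ s → s ≤ t → t ≤ 1 → 0 ≤ ω s t)
    (hsuper : ∀ s u t : ℝ, 0 ≤ s → s ≤ u → u ≤ t → t ≤ 1 → ω s u + ω u t ≤ ω s t)
    (μ : ℝ → ℝ → E)
    (hμ : ∀ s u t : ℝ, 0 ≤ s → s ≤ u → u ≤ t → t ≤ 1 →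
      ‖μ t s - (μ t u + μ u s)‖ ≤ c₁ * ω s t ^ θ) :
    ∀ (N : ℕ) (q : ℕ → ℝ), 1 ≤ N → Monotone q → 0 ≤ q 0 → q N ≤ 1 →
      ‖(∑ i ∈ range N, μ (q (i + 1)) (q i)) - μ (q N) (q 0)‖
        ≤ c₁ * (∑ r ∈ range N, (2 / (r : ℝ)) ^ θ) * ω (q 0) (q N) ^ θ := by
  intro N
  induction N with
  | zero => intro q h10; omega
  | succ N ih =>
    intro q _ hq h0 h1
    rcases Nat.eq_zero_or_pos N with hN0 | hNpos
    · subst hN0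
      have h20 : ((2:ℝ) / ((0:ℕ):ℝ)) ^ θ = 0 := by
        rw [Nat.cast_zero, div_zero, Real.zero_rpow (by linarith : θ ≠ 0)]
      simp [h20]
      have : (0:ℝ) ^ θ = 0 := Real.zero_rpow (by linarith)
      rw [this, mul_zero, zero_mul]
    · -- main case: N ≥ 1, partition with N+1 intervals
      obtain ⟨j₀, hj₀, hsmall⟩ := SewingAux.exists_small ω hn hsuper N hNpos q hq h0 h1
      set W := ω (q 0) (q (N + 1)) with hWdef
      have hWnn : 0 ≤ W := hn _ _ h0 (hq (by omega)) h1
      set q' : ℕ → ℝ := fun k => if k < j₀ + 1 then q k else q (k + 1) with hq'def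
      have hq'eq : ∀ k, q' k = if k < j₀ + 1 then q k else q (k + 1) := fun k => rfl
      have hq'mono : Monotone q' := by
        apply monotone_nat_of_le_succ
        intro k
        rw [hq'eq, hq'eq]
        split_ifs with h1' h2' h2'
        · exact hq (by omega)
        · exact hq (by omega)
        · omega
        · exact hq (by omega)
      have hq'0 : q' 0 = q 0 := by rw [hq'eq, if_pos (by omega)]
      have hq'N : q' N = q (N + 1) := by rw [hq'eq, if_neg (by omega)]
      have IH := ih q' hNpos hq'mono (hq'0 ▸ h0) (hq'N ▸ h1)
      rw [hq'0, hq'N] at IH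
      have hid := sum_remove μ q q' N j₀ hj₀ hq'eq
      -- bound the removed term
      have h0j : 0 ≤ q j₀ := h0.trans (hq (by omega))
      have hcorr : ‖μ (q (j₀ + 2)) (q (j₀ + 1)) + μ (q (j₀ + 1)) (q j₀) - μ (q (j₀ + 2)) (q j₀)‖
          ≤ c₁ * ((2 / (N : ℝ)) ^ θ * W ^ θ) := by
        have hb := hμ (q j₀) (q (j₀ + 1)) (q (j₀ + 2)) h0j (hq (by omega)) (hq (by omega))
          ((hq (by omega : j₀ + 2 ≤ N + 1)).trans h1)
        have hnorm : ‖μ (q (j₀ + 2)) (q (j₀ + 1)) + μ (q (j₀ + 1)) (q j₀) - μ (q (j₀ + 2)) (q j₀)‖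
            = ‖μ (q (j₀ + 2)) (q j₀) - (μ (q (j₀ + 2)) (q (j₀ + 1)) + μ (q (j₀ + 1)) (q j₀))‖ := by
          rw [← norm_neg]; congr 1; abel
        rw [hnorm]
        refine hb.trans ?_
        have hωnn : 0 ≤ ω (q j₀) (q (j₀ + 2)) := hn _ _ h0j (hq (by omega))
          ((hq (by omega : j₀ + 2 ≤ N + 1)).trans h1)
        have hpow : ω (q j₀) (q (j₀ + 2)) ^ θ ≤ (2 * W / N) ^ θ :=
          Real.rpow_le_rpow hωnn hsmall (by linarith)
        have hEq : (2 * W / (N:ℝ)) ^ θ = (2 / (N : ℝ)) ^ θ * W ^ θ := by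
          rw [show 2 * W / (N:ℝ) = (2 / (N:ℝ)) * W by ring]
          exact Real.mul_rpow (by positivity) hWnn
        rw [hEq] at hpow
        have := mul_le_mul_of_nonneg_left hpow (le_of_lt hc₁)
        linarith
      -- assemble
      have key : (∑ i ∈ range (N + 1), μ (q (i + 1)) (q i)) - μ (q (N + 1)) (q 0)
          = ((∑ i ∈ range N, μ (q' (i + 1)) (q' i)) - μ (q (N + 1)) (q 0))
            + (μ (q (j₀ + 2)) (q (j₀ + 1)) + μ (q (j₀ + 1)) (q j₀) - μ (q (j₀ + 2)) (q j₀)) := by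
        rw [hid]; abel
      rw [key, Finset.sum_range_succ]
      calc ‖_ + _‖ ≤ _ := norm_add_le _ _
        _ ≤ c₁ * (∑ r ∈ range N, (2 / (r : ℝ)) ^ θ) * W ^ θ
            + c₁ * ((2 / (N : ℝ)) ^ θ * W ^ θ) := add_le_add IH hcorr
        _ = c₁ * ((∑ r ∈ range N, (2 / (r : ℝ)) ^ θ) + (2 / (N : ℝ)) ^ θ) * W ^ θ := by ring

end SewingAux2
namespace SewingAux3
open Finset Filter

variable {E : Type*} [NormedAddCommGroup E]

noncomputable def Kc (θ : ℝ) : ℝ := ∑' r : ℕ, (2 / (r : ℝ)) ^ θ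

lemma K_summable (θ : ℝ) (hθ : 1 < θ) : Summable (fun r : ℕ => (2 / (r : ℝ)) ^ θ) := by
  have h := (Real.summable_one_div_nat_rpow (p := θ)).mpr hθ
  refine (h.mul_left ((2:ℝ) ^ θ)).congr ?_
  intro r
  rw [Real.div_rpow (by norm_num) (Nat.cast_nonneg r), mul_one_div]

lemma K_le (θ : ℝ) (hθ : 1 < θ) (N : ℕ) :
    ∑ r ∈ range N, (2 / (r : ℝ)) ^ θ ≤ Kc θ :=
  Summable.sum_le_tsum (range N) (fun i _ => Real.rpow_nonneg (by positivity) θ) (K_summable θ hθ)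

lemma K_nonneg (θ : ℝ) (hθ : 1 < θ) : 0 ≤ Kc θ :=
  (by simp : (0:ℝ) ≤ ∑ r ∈ range 0, (2 / (r : ℝ)) ^ θ).trans (K_le θ hθ 0)

/-- dyadic partition points of `[s,t]`, clamped -/
noncomputable def pt (s t : ℝ) (n i : ℕ) : ℝ := min t (max s ((i : ℝ) / 2 ^ n))

lemma pt_mono (s t : ℝ) (n : ℕ) : Monotone (pt s t n) := by
  intro i j hij
  unfold pt
  gcongr <;> exact_mod_cast hij

lemma pt_ge {s t : ℝ} (hst : s ≤ t) (n i : ℕ) : s ≤ pt s t n i :=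
  le_min hst (le_max_left _ _)

lemma pt_le (s t : ℝ) (n i : ℕ) : pt s t n i ≤ t := min_le_left _ _

lemma pt_zero {s t : ℝ} (h0 : 0 ≤ s) (hst : s ≤ t) (n : ℕ) : pt s t n 0 = s := by
  unfold pt
  rw [Nat.cast_zero, zero_div, max_eq_left h0, min_eq_right hst]

lemma pt_last {s t : ℝ} (hst : s ≤ t) (ht1 : t ≤ 1) (n : ℕ) : pt s t n (2 ^ n) = t := by
  unfold pt
  have h : ((2 ^ n : ℕ) : ℝ) / 2 ^ n = 1 := by
    rw [Nat.cast_pow, Nat.cast_ofNat]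
    exact div_self (by positivity)
  rw [h, max_eq_right (hst.trans ht1), min_eq_left ht1]

lemma clamp_lip (s t a b : ℝ) (hab : a ≤ b) :
    min t (max s b) - min t (max s a) ≤ b - a := by
  simp only [min_def, max_def]
  split_ifs <;> linarith

lemma pt_step (s t : ℝ) (n i : ℕ) : pt s t n (i + 1) - pt s t n i ≤ 1 / 2 ^ n := by
  unfold pt
  have h := clamp_lip s t ((i : ℝ) / 2 ^ n) (((i : ℝ) + 1) / 2 ^ n)
    (by gcongr <;> linarith)
  have e : ((i : ℝ) + 1) / 2 ^ n - (i : ℝ) / 2 ^ n = 1 / 2 ^ n := by ring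
  push_cast
  push_cast at h
  linarith

lemma pt_refine (s t : ℝ) {m n : ℕ} (h : m ≤ n) (j : ℕ) :
    pt s t m j = pt s t n (j * 2 ^ (n - m)) := by
  unfold pt
  congr 2
  rw [div_eq_div_iff (by positivity) (by positivity)]
  push_cast
  have e : (2:ℝ) ^ (n - m) * 2 ^ m = 2 ^ n := by
    rw [← pow_add]
    congr 1
    omega
  calc (j : ℝ) * 2 ^ n = (j : ℝ) * (2 ^ (n - m) * 2 ^ m) := by rw [e]
    _ = (j : ℝ) * 2 ^ (n - m) * 2 ^ m := by ring

lemma sum_range_mul {M : Type*} [AddCommMonoid M] (f : ℕ → M) (a K : ℕ) :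
    ∑ i ∈ range (a * K), f i = ∑ j ∈ range a, ∑ i ∈ range K, f (j * K + i) := by
  induction a with
  | zero => simp
  | succ a ih =>
    rw [show (a + 1) * K = a * K + K by ring, Finset.sum_range_add, ih, Finset.sum_range_succ]

lemma sum_rpow_le (θ : ℝ) (hθ : 1 < θ) (ω : ℝ → ℝ → ℝ)
    (hn : ∀ s t : ℝ, 0 ≤ s → s ≤ t → t ≤ 1 → 0 ≤ ω s t)
    (hsuper : ∀ s u t : ℝ, 0 ≤ s → s ≤ u → u ≤ t → t ≤ 1 → ω s u + ω u t ≤ ω s t)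
    (J : ℕ) (q : ℕ → ℝ) (hq : Monotone q) (h0 : 0 ≤ q 0) (h1 : q J ≤ 1)
    (ε : ℝ) (hε : 0 ≤ ε) (hsmall : ∀ j < J, ω (q j) (q (j + 1)) ≤ ε) :
    ∑ j ∈ range J, ω (q j) (q (j + 1)) ^ θ ≤ ε ^ (θ - 1) * ω (q 0) (q J) := by
  have hterm : ∀ j < J, ω (q j) (q (j + 1)) ^ θ ≤ ε ^ (θ - 1) * ω (q j) (q (j + 1)) := by
    intro j hj
    have hx : 0 ≤ ω (q j) (q (j + 1)) :=
      hn _ _ (h0.trans (hq (by omega))) (hq (by omega)) ((hq (by omega : j + 1 ≤ J)).trans h1)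
    rcases eq_or_lt_of_le hx with hx0 | hx0
    · rw [← hx0, Real.zero_rpow (by linarith : θ ≠ 0)]
      positivity
    · have e := Real.rpow_add hx0 (θ - 1) 1
      rw [show θ - 1 + 1 = θ from by ring, Real.rpow_one] at e
      rw [e]
      exact mul_le_mul_of_nonneg_right
        (Real.rpow_le_rpow hx (hsmall j hj) (by linarith)) hx
  calc ∑ j ∈ range J, ω (q j) (q (j + 1)) ^ θ
      ≤ ∑ j ∈ range J, ε ^ (θ - 1) * ω (q j) (q (j + 1)) :=
        Finset.sum_le_sum (fun j hj => hterm j (Finset.mem_range.mp hj))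
    _ = ε ^ (θ - 1) * ∑ j ∈ range J, ω (q j) (q (j + 1)) := by rw [Finset.mul_sum]
    _ ≤ ε ^ (θ - 1) * ω (q 0) (q J) :=
        mul_le_mul_of_nonneg_left (SewingAux.chain ω hn hsuper J q hq h0 h1)
          (Real.rpow_nonneg hε _)

noncomputable def S (μ : ℝ → ℝ → E) (s t : ℝ) (n : ℕ) : E :=
  ∑ i ∈ range (2 ^ n), μ (pt s t n (i + 1)) (pt s t n i)

lemma S_young (θ c₁ : ℝ) (hθ : 1 < θ) (hc₁ : 0 < c₁) (ω : ℝ → ℝ → ℝ)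
    (hn : ∀ s t : ℝ, 0 ≤ s → s ≤ t → t ≤ 1 → 0 ≤ ω s t)
    (hsuper : ∀ s u t : ℝ, 0 ≤ s → s ≤ u → u ≤ t → t ≤ 1 → ω s u + ω u t ≤ ω s t)
    (μ : ℝ → ℝ → E)
    (hμ : ∀ s u t : ℝ, 0 ≤ s → s ≤ u → u ≤ t → t ≤ 1 →
      ‖μ t s - (μ t u + μ u s)‖ ≤ c₁ * ω s t ^ θ)
    {s t : ℝ} (h0 : 0 ≤ s) (hst : s ≤ t) (ht1 : t ≤ 1) (n : ℕ) :
    ‖S μ s t n - μ t s‖ ≤ c₁ * Kc θ * ω s t ^ θ := by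
  have hy := SewingAux2.young θ c₁ hθ hc₁ ω hn hsuper μ hμ (2 ^ n) (pt s t n)
    (Nat.one_le_two_pow) (pt_mono s t n)
    (by rw [pt_zero h0 hst]; exact h0) (by rw [pt_last hst ht1]; exact ht1)
  rw [pt_zero h0 hst, pt_last hst ht1] at hy
  refine hy.trans ?_
  have hx : 0 ≤ ω s t ^ θ := Real.rpow_nonneg (hn s t h0 hst ht1) θ
  exact mul_le_mul_of_nonneg_right
    (mul_le_mul_of_nonneg_left (K_le θ hθ _) hc₁.le) hx

lemma S_diff (θ c₁ : ℝ) (hθ : 1 < θ) (hc₁ : 0 < c₁) (ω : ℝ → ℝ → ℝ)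
    (hn : ∀ s t : ℝ, 0 ≤ s → s ≤ t → t ≤ 1 → 0 ≤ ω s t)
    (hsuper : ∀ s u t : ℝ, 0 ≤ s → s ≤ u → u ≤ t → t ≤ 1 → ω s u + ω u t ≤ ω s t)
    (μ : ℝ → ℝ → E)
    (hμ : ∀ s u t : ℝ, 0 ≤ s → s ≤ u → u ≤ t → t ≤ 1 →
      ‖μ t s - (μ t u + μ u s)‖ ≤ c₁ * ω s t ^ θ)
    {s t : ℝ} (h0 : 0 ≤ s) (hst : s ≤ t) (ht1 : t ≤ 1) {m n : ℕ} (hmn : m ≤ n)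
    (ε : ℝ) (hε : 0 ≤ ε)
    (hsm : ∀ j, ω (pt s t m j) (pt s t m (j + 1)) ≤ ε) :
    ‖S μ s t n - S μ s t m‖ ≤ c₁ * Kc θ * (ε ^ (θ - 1) * ω s t) := by
  have hsplit : S μ s t n = ∑ j ∈ range (2 ^ m), ∑ i ∈ range (2 ^ (n - m)),
      μ (pt s t n (j * 2 ^ (n - m) + (i + 1))) (pt s t n (j * 2 ^ (n - m) + i)) := by
    unfold S
    rw [show (2:ℕ) ^ n = 2 ^ m * 2 ^ (n - m) from by rw [← pow_add]; congr 1; omega]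
    rw [sum_range_mul (fun i => μ (pt s t n (i + 1)) (pt s t n i)) (2 ^ m) (2 ^ (n - m))]
    apply Finset.sum_congr rfl; intro j _; apply Finset.sum_congr rfl; intro i _
    congr 2 <;> omega
  have hblock : ∀ j < 2 ^ m,
      ‖(∑ i ∈ range (2 ^ (n - m)),
          μ (pt s t n (j * 2 ^ (n - m) + (i + 1))) (pt s t n (j * 2 ^ (n - m) + i)))
        - μ (pt s t m (j + 1)) (pt s t m j)‖
        ≤ c₁ * Kc θ * ω (pt s t m j) (pt s t m (j + 1)) ^ θ := by
    intro j hj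
    set q : ℕ → ℝ := fun i => pt s t n (j * 2 ^ (n - m) + i) with hqdef
    have hq0 : q 0 = pt s t m j := by
      rw [hqdef]; simp only [Nat.add_zero]; exact (pt_refine s t hmn j).symm
    have hqN : q (2 ^ (n - m)) = pt s t m (j + 1) := by
      rw [hqdef]; simp only
      rw [show j * 2 ^ (n - m) + 2 ^ (n - m) = (j + 1) * 2 ^ (n - m) from by ring]
      exact (pt_refine s t hmn (j + 1)).symm
    have hqmono : Monotone q := fun a b hab => pt_mono s t n (by omega)
    have hy := SewingAux2.young θ c₁ hθ hc₁ ω hn hsuper μ hμ (2 ^ (n - m)) q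
      Nat.one_le_two_pow hqmono
      (by rw [hq0]; exact h0.trans (pt_ge hst m j))
      (by rw [hqN]; exact (pt_le s t m (j + 1)).trans ht1)
    rw [hq0, hqN] at hy
    refine hy.trans ?_
    have hx : 0 ≤ ω (pt s t m j) (pt s t m (j + 1)) ^ θ :=
      Real.rpow_nonneg (hn _ _ (h0.trans (pt_ge hst m j)) (pt_mono s t m (by omega))
        ((pt_le s t m (j + 1)).trans ht1)) θ
    exact mul_le_mul_of_nonneg_right
      (mul_le_mul_of_nonneg_left (K_le θ hθ _) hc₁.le) hx
  rw [hsplit]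
  unfold S
  rw [← Finset.sum_sub_distrib]
  refine (norm_sum_le _ _).trans ?_
  calc ∑ j ∈ range (2 ^ m), ‖_‖
      ≤ ∑ j ∈ range (2 ^ m), c₁ * Kc θ * ω (pt s t m j) (pt s t m (j + 1)) ^ θ :=
        Finset.sum_le_sum (fun j hj => hblock j (Finset.mem_range.mp hj))
    _ = c₁ * Kc θ * ∑ j ∈ range (2 ^ m), ω (pt s t m j) (pt s t m (j + 1)) ^ θ := by
        rw [Finset.mul_sum]
    _ ≤ c₁ * Kc θ * (ε ^ (θ - 1) * ω s t) := by
        refine mul_le_mul_of_nonneg_left ?_ (mul_nonneg hc₁.le (K_nonneg θ hθ))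
        have := sum_rpow_le θ hθ ω hn hsuper (2 ^ m) (pt s t m) (pt_mono s t m)
          (by rw [pt_zero h0 hst]; exact h0) (by rw [pt_last hst ht1]; exact ht1)
          ε hε (fun j _ => hsm j)
        rwa [pt_zero h0 hst, pt_last hst ht1] at this
  -- positivity side: 0 ≤ c₁ * Kc θ handled above

lemma mu_diag (θ c₁ : ℝ) (hθ : 1 < θ) (ω : ℝ → ℝ → ℝ)
    (hdiag : ∀ s : ℝ, 0 ≤ s → s ≤ 1 → ω s s = 0) (μ : ℝ → ℝ → E)
    (hμ : ∀ s u t : ℝ, 0 ≤ s → s ≤ u → u ≤ t → t ≤ 1 →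
      ‖μ t s - (μ t u + μ u s)‖ ≤ c₁ * ω s t ^ θ)
    (x : ℝ) (h0 : 0 ≤ x) (h1 : x ≤ 1) : μ x x = 0 := by
  have h := hμ x x x h0 le_rfl le_rfl h1
  rw [hdiag x h0 h1, Real.zero_rpow (by linarith : θ ≠ 0), mul_zero] at h
  rw [show μ x x - (μ x x + μ x x) = -(μ x x) from by abel, norm_neg] at h
  exact norm_le_zero_iff.mp h

end SewingAux3
namespace SewingAux4
open Finset Filter SewingAux3

variable {E : Type*} [NormedAddCommGroup E]

lemma S_add_est (θ c₁ : ℝ) (hθ : 1 < θ) (hc₁ : 0 < c₁) (ω : ℝ → ℝ → ℝ)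
    (hn : ∀ s t : ℝ, 0 ≤ s → s ≤ t → t ≤ 1 → 0 ≤ ω s t)
    (hdiag : ∀ s : ℝ, 0 ≤ s → s ≤ 1 → ω s s = 0)
    (μ : ℝ → ℝ → E)
    (hμ : ∀ s u t : ℝ, 0 ≤ s → s ≤ u → u ≤ t → t ≤ 1 →
      ‖μ t s - (μ t u + μ u s)‖ ≤ c₁ * ω s t ^ θ)
    {s u t : ℝ} (h0 : 0 ≤ s) (hsu : s ≤ u) (hut : u ≤ t) (ht1 : t ≤ 1) (n : ℕ) :
    ‖S μ s u n + S μ u t n - S μ s t n‖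
      ≤ c₁ * ∑ i ∈ range (2 ^ n), ω (pt s t n i) (pt s t n (i + 1)) ^ θ := by
  have hst : s ≤ t := hsu.trans hut
  have hA : ∀ i, pt s u n i = min u (pt s t n i) := by
    intro i
    unfold pt
    rw [← min_assoc, min_eq_left hut]
  have hB : ∀ i, pt u t n i = max u (pt s t n i) := by
    intro i
    unfold pt
    rw [max_min_distrib_left, max_eq_right hut, ← max_assoc, max_eq_left hsu]
  unfold S
  rw [← Finset.sum_add_distrib, ← Finset.sum_sub_distrib]
  refine (norm_sum_le _ _).trans ?_
  rw [Finset.mul_sum]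
  refine Finset.sum_le_sum ?_
  intro i _
  set c : ℕ → ℝ := pt s t n with hc
  have hc0 : 0 ≤ c i := h0.trans (pt_ge hst n i)
  have hcmono : c i ≤ c (i + 1) := pt_mono s t n (by omega)
  have hc1 : c (i + 1) ≤ 1 := (pt_le s t n (i + 1)).trans ht1
  have hu0 : 0 ≤ u := h0.trans hsu
  have hu1 : u ≤ 1 := hut.trans ht1
  have hrpow : 0 ≤ c₁ * ω (c i) (c (i + 1)) ^ θ :=
    mul_nonneg hc₁.le (Real.rpow_nonneg (hn _ _ hc0 hcmono hc1) θ)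
  rw [hA, hA, hB, hB]
  rcases le_total u (c i) with h | h
  · have h' : u ≤ c (i + 1) := h.trans hcmono
    rw [min_eq_left h, min_eq_left h', max_eq_right h, max_eq_right h']
    rw [mu_diag θ c₁ hθ ω hdiag μ hμ u hu0 hu1]
    simpa using hrpow
  · rcases le_total u (c (i + 1)) with h' | h'
    · rw [min_eq_right h, min_eq_left h', max_eq_left h, max_eq_right h']
      have hb := hμ (c i) u (c (i + 1)) hc0 h h' hc1
      rw [show μ u (c i) + μ (c (i + 1)) u - μ (c (i + 1)) (c i)
          = -(μ (c (i + 1)) (c i) - (μ (c (i + 1)) u + μ u (c i))) from by abel, norm_neg]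
      exact hb
    · have h'' : c i ≤ u := hcmono.trans h'
      rw [min_eq_right h, min_eq_right h', max_eq_left h'', max_eq_left h']
      rw [mu_diag θ c₁ hθ ω hdiag μ hμ u hu0 hu1]
      simpa using hrpow

lemma modulus (ω : ℝ → ℝ → ℝ)
    (hcont : ContinuousOn (fun q : ℝ × ℝ => ω q.1 q.2)
      {q : ℝ × ℝ | 0 ≤ q.1 ∧ q.1 ≤ q.2 ∧ q.2 ≤ 1})
    (hdiag : ∀ s : ℝ, 0 ≤ s → s ≤ 1 → ω s s = 0) :
    ∀ ε > 0, ∃ δ > 0, ∀ s t : ℝ, 0 ≤ s → s ≤ t → t ≤ 1 → t - s ≤ δ → ω s t ≤ ε := by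
  set T : Set (ℝ × ℝ) := {q : ℝ × ℝ | 0 ≤ q.1 ∧ q.1 ≤ q.2 ∧ q.2 ≤ 1} with hT
  have hclosed : IsClosed T := by
    have : T = {q : ℝ × ℝ | 0 ≤ q.1} ∩ ({q : ℝ × ℝ | q.1 ≤ q.2} ∩ {q : ℝ × ℝ | q.2 ≤ 1}) := by
      ext q; simp only [hT, Set.mem_setOf_eq, Set.mem_inter_iff]
    rw [this]
    exact (isClosed_le continuous_const continuous_fst).inter
      ((isClosed_le continuous_fst continuous_snd).inter
        (isClosed_le continuous_snd continuous_const))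
  have hcomp : IsCompact T := by
    refine IsCompact.of_isClosed_subset (isCompact_Icc.prod isCompact_Icc
      (s := Set.Icc (0:ℝ) 1) (t := Set.Icc (0:ℝ) 1)) hclosed ?_
    rintro ⟨a, b⟩ ⟨h1, h2, h3⟩
    exact ⟨⟨h1, (h2.trans h3)⟩, ⟨h1.trans h2, h3⟩⟩
  have hUC := hcomp.uniformContinuousOn_of_continuous hcont
  rw [Metric.uniformContinuousOn_iff] at hUC
  intro ε hε
  obtain ⟨δ, hδ, H⟩ := hUC ε hε
  refine ⟨δ / 2, by positivity, ?_⟩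
  intro s t h0 hst h1 hd
  have hx : ((s, t) : ℝ × ℝ) ∈ T := ⟨h0, hst, h1⟩
  have hy : ((s, s) : ℝ × ℝ) ∈ T := ⟨h0, le_rfl, hst.trans h1⟩
  have hdist : dist ((s, t) : ℝ × ℝ) ((s, s) : ℝ × ℝ) < δ := by
    rw [Prod.dist_eq]
    have e1 : dist s s = 0 := by simp
    have e2 : dist t s = t - s := by
      rw [Real.dist_eq, abs_of_nonneg (by linarith)]
    rw [e1, e2]
    rw [max_eq_right (by linarith)]
    linarith
  have hlt := H (s, t) hx (s, s) hy hdist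
  simp only at hlt
  rw [hdiag s h0 (hst.trans h1), Real.dist_eq, sub_zero] at hlt
  exact (le_abs_self _).trans hlt.le

end SewingAux4
open Finset Filter Topology SewingAux3 SewingAux4

/-- **Sewing lemma with a control.** Given a control `ω` on `[0,1]` (continuous, vanishing on
the diagonal, superadditive, nonnegative) and a family `μ` with values in a Banach space that is
almost additive with respect to `ω^θ` for some `θ > 1`, there is a constant `C` and a unique
function `φ` vanishing at `0` whose increments are approximated by `μ` up to `C ω(s,t)^θ`. -/
theorem sewing_lemma_with_control
    {E : Type*} [NormedAddCommGroup E] [NormedSpace ℝ E] [CompleteSpace E]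
    (θ c₁ : ℝ) (hθ : 1 < θ) (hc₁ : 0 < c₁)
    (ω : ℝ → ℝ → ℝ)
    (hω_cont : ContinuousOn (fun q : ℝ × ℝ => ω q.1 q.2)
      {q : ℝ × ℝ | 0 ≤ q.1 ∧ q.1 ≤ q.2 ∧ q.2 ≤ 1})
    (hω_nonneg : ∀ s t : ℝ, 0 ≤ s → s ≤ t → t ≤ 1 → 0 ≤ ω s t)
    (hω_diag : ∀ s : ℝ, 0 ≤ s → s ≤ 1 → ω s s = 0)
    (hω_super : ∀ s u t : ℝ, 0 ≤ s → s ≤ u → u ≤ t → t ≤ 1 → ω s u + ω u t ≤ ω s t)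
    (μ : ℝ → ℝ → E)
    (hμ : ∀ s u t : ℝ, 0 ≤ s → s ≤ u → u ≤ t → t ≤ 1 →
      ‖μ t s - (μ t u + μ u s)‖ ≤ c₁ * ω s t ^ θ) :
    ∃ C : ℝ, ∃ φ : ℝ → E, φ 0 = 0 ∧
      (∀ s t : ℝ, 0 ≤ s → s ≤ t → t ≤ 1 → ‖φ t - φ s - μ t s‖ ≤ C * ω s t ^ θ) ∧
      ∀ ψ₁ ψ₂ : ℝ → E, ψ₁ 0 = 0 → ψ₂ 0 = 0 →
        (∃ C₁ : ℝ, ∀ s t : ℝ, 0 ≤ s → s ≤ t → t ≤ 1 →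
          ‖ψ₁ t - ψ₁ s - μ t s‖ ≤ C₁ * ω s t ^ θ) →
        (∃ C₂ : ℝ, ∀ s t : ℝ, 0 ≤ s → s ≤ t → t ≤ 1 →
          ‖ψ₂ t - ψ₂ s - μ t s‖ ≤ C₂ * ω s t ^ θ) →
        ∀ t : ℝ, 0 ≤ t → t ≤ 1 → ψ₁ t = ψ₂ t := by
  classical
  have hθ0 : (0:ℝ) < θ - 1 := by linarith
  -- uniform small steps at fine dyadic levels
  have hstep : ∀ ε > 0, ∃ m₀ : ℕ, ∀ m, m₀ ≤ m → ∀ s t : ℝ, 0 ≤ s → s ≤ t → t ≤ 1 →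
      ∀ j, ω (pt s t m j) (pt s t m (j + 1)) ≤ ε := by
    intro ε hε
    obtain ⟨δ, hδ, H⟩ := modulus ω hω_cont hω_diag ε hε
    obtain ⟨m₀, hm₀⟩ : ∃ m₀ : ℕ, (1:ℝ) / 2 ^ m₀ ≤ δ := by
      obtain ⟨m₀, hm⟩ := exists_pow_lt_of_lt_one hδ (by norm_num : (1:ℝ)/2 < 1)
      refine ⟨m₀, ?_⟩
      rw [div_pow, one_pow] at hm
      exact hm.le
    refine ⟨m₀, ?_⟩
    intro m hm s t h0 hst ht1 j
    have hp0 : 0 ≤ pt s t m j := h0.trans (pt_ge hst m j)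
    have hpm : pt s t m j ≤ pt s t m (j + 1) := pt_mono s t m (by omega)
    have hp1 : pt s t m (j + 1) ≤ 1 := (pt_le s t m (j + 1)).trans ht1
    refine H _ _ hp0 hpm hp1 ?_
    have h2 : (2:ℝ) ^ m₀ ≤ 2 ^ m := pow_le_pow_right₀ (by norm_num) hm
    have := pt_step s t m j
    have : (1:ℝ) / 2 ^ m ≤ 1 / 2 ^ m₀ := by
      apply one_div_le_one_div_of_le (by positivity) h2
    linarith [pt_step s t m j]
  -- helper to absorb powers
  have hpick : ∀ A ε : ℝ, 0 < A → 0 < ε → ∃ x, 0 < x ∧ A * x ^ (θ - 1) < ε := by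
    intro A ε hA hε
    refine ⟨(ε / (2 * A)) ^ (1 / (θ - 1)), Real.rpow_pos_of_pos (by positivity) _, ?_⟩
    have hb : (0:ℝ) ≤ ε / (2 * A) := by positivity
    rw [← Real.rpow_mul hb]
    rw [show 1 / (θ - 1) * (θ - 1) = 1 from by field_simp, Real.rpow_one]
    rw [show A * (ε / (2 * A)) = ε / 2 from by field_simp]
    linarith
  set Kθ := Kc θ with hKθ
  have hKnn : 0 ≤ Kθ := K_nonneg θ hθ
  -- Cauchy sequences
  have hcauchy : ∀ s t : ℝ, 0 ≤ s → s ≤ t → t ≤ 1 → CauchySeq (fun n => S μ s t n) := by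
    intro s t h0 hst ht1
    rw [Metric.cauchySeq_iff']
    intro ε hε
    have hωst : 0 ≤ ω s t := hω_nonneg s t h0 hst ht1
    have hA : 0 < c₁ * (Kθ + 1) * (ω s t + 1) := by positivity
    obtain ⟨x, hx, hxlt⟩ := hpick _ ε hA hε
    obtain ⟨m₀, hm₀⟩ := hstep x hx
    refine ⟨m₀, ?_⟩
    intro n hn
    rw [dist_eq_norm]
    have hd := S_diff θ c₁ hθ hc₁ ω hω_nonneg hω_super μ hμ h0 hst ht1 hn x hx.le
      (hm₀ m₀ le_rfl s t h0 hst ht1)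
    refine hd.trans_lt (lt_of_le_of_lt ?_ hxlt)
    have hxp : 0 ≤ x ^ (θ - 1) := Real.rpow_nonneg hx.le _
    calc c₁ * Kθ * (x ^ (θ - 1) * ω s t)
        = (c₁ * Kθ * ω s t) * x ^ (θ - 1) := by ring
      _ ≤ (c₁ * (Kθ + 1) * (ω s t + 1)) * x ^ (θ - 1) := by
          apply mul_le_mul_of_nonneg_right _ hxp
          nlinarith
      _ = c₁ * (Kθ + 1) * (ω s t + 1) * x ^ (θ - 1) := by ring
  -- the limit function
  set Φ : ℝ → ℝ → E := fun s t => limUnder atTop (fun n => S μ s t n) with hΦdef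
  have hΦ : ∀ s t : ℝ, 0 ≤ s → s ≤ t → t ≤ 1 →
      Tendsto (fun n => S μ s t n) atTop (𝓝 (Φ s t)) := by
    intro s t h0 hst ht1
    obtain ⟨x, hx⟩ := cauchySeq_tendsto_of_complete (hcauchy s t h0 hst ht1)
    have he : Φ s t = x := hx.limUnder_eq
    rwa [he]
  -- limit approximation bound
  have hΦμ : ∀ s t : ℝ, 0 ≤ s → s ≤ t → t ≤ 1 →
      ‖Φ s t - μ t s‖ ≤ c₁ * Kθ * ω s t ^ θ := by
    intro s t h0 hst ht1
    refine le_of_tendsto' (((hΦ s t h0 hst ht1).sub tendsto_const_nhds).norm) ?_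
    intro n
    exact S_young θ c₁ hθ hc₁ ω hω_nonneg hω_super μ hμ h0 hst ht1 n
  -- additivity of the limit
  have hΦadd : ∀ s u t : ℝ, 0 ≤ s → s ≤ u → u ≤ t → t ≤ 1 →
      Φ s u + Φ u t = Φ s t := by
    intro s u t h0 hsu hut ht1
    have hst : s ≤ t := hsu.trans hut
    have h1 : Tendsto (fun n => S μ s u n + S μ u t n - S μ s t n) atTop
        (𝓝 (Φ s u + Φ u t - Φ s t)) :=
      ((hΦ s u h0 hsu (hut.trans ht1)).add (hΦ u t (h0.trans hsu) hut ht1)).sub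
        (hΦ s t h0 hst ht1)
    have h2 : Tendsto (fun n => S μ s u n + S μ u t n - S μ s t n) atTop (𝓝 (0:E)) := by
      rw [NormedAddCommGroup.tendsto_nhds_zero]
      intro ε hε
      have hωst : 0 ≤ ω s t := hω_nonneg s t h0 hst ht1
      have hA : 0 < c₁ * (ω s t + 1) := by positivity
      obtain ⟨x, hx, hxlt⟩ := hpick _ ε hA hε
      obtain ⟨m₀, hm₀⟩ := hstep x hx
      rw [eventually_atTop]
      refine ⟨m₀, ?_⟩
      intro n hn
      have hest := S_add_est θ c₁ hθ hc₁ ω hω_nonneg hω_diag μ hμ h0 hsu hut ht1 n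
      have hsum : ∑ i ∈ range (2 ^ n), ω (pt s t n i) (pt s t n (i + 1)) ^ θ
          ≤ x ^ (θ - 1) * ω s t := by
        have := sum_rpow_le θ hθ ω hω_nonneg hω_super (2 ^ n) (pt s t n) (pt_mono s t n)
          (by rw [pt_zero h0 hst]; exact h0) (by rw [pt_last hst ht1]; exact ht1)
          x hx.le (fun j _ => hm₀ n hn s t h0 hst ht1 j)
        rwa [pt_zero h0 hst, pt_last hst ht1] at this
      refine lt_of_le_of_lt (hest.trans ?_) hxlt
      have hxp : 0 ≤ x ^ (θ - 1) := Real.rpow_nonneg hx.le _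
      calc c₁ * ∑ i ∈ range (2 ^ n), ω (pt s t n i) (pt s t n (i + 1)) ^ θ
          ≤ c₁ * (x ^ (θ - 1) * ω s t) := mul_le_mul_of_nonneg_left hsum hc₁.le
        _ = (c₁ * ω s t) * x ^ (θ - 1) := by ring
        _ ≤ (c₁ * (ω s t + 1)) * x ^ (θ - 1) := by
            apply mul_le_mul_of_nonneg_right _ hxp
            nlinarith
    have := tendsto_nhds_unique h1 h2
    have h3 : Φ s u + Φ u t - Φ s t = 0 := this
    linear_combination (norm := abel) h3
  refine ⟨c₁ * Kθ, fun t => Φ 0 t, ?_, ?_, ?_⟩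
  · -- φ 0 = 0
    have hzero : ∀ n, S μ 0 0 n = 0 := by
      intro n
      unfold SewingAux3.S
      apply Finset.sum_eq_zero
      intro i _
      have hp : ∀ k : ℕ, pt 0 0 n k = 0 := fun k =>
        le_antisymm (pt_le 0 0 n k) (pt_ge le_rfl n k)
      rw [hp, hp]
      exact mu_diag θ c₁ hθ ω hω_diag μ hμ 0 le_rfl zero_le_one
    have h := hΦ 0 0 le_rfl le_rfl zero_le_one
    rw [show (fun n => S μ 0 0 n) = fun _ => (0:E) from funext hzero] at h
    exact tendsto_nhds_unique h tendsto_const_nhds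
  · -- main estimate
    intro s t h0 hst ht1
    have hadd := hΦadd 0 s t le_rfl h0 hst ht1
    have : Φ 0 t - Φ 0 s = Φ s t := by
      rw [← hadd]; abel
    rw [this]
    exact hΦμ s t h0 hst ht1
  · -- uniqueness
    intro ψ₁ ψ₂ h10 h20 ⟨C₁, hC₁⟩ ⟨C₂, hC₂⟩ t h0t ht1
    set g : ℝ → E := fun x => ψ₁ x - ψ₂ x with hgdef
    set D : ℝ := max (C₁ + C₂) 0 with hD
    have hDnn : 0 ≤ D := le_max_right _ _
    have hginc : ∀ a b : ℝ, 0 ≤ a → a ≤ b → b ≤ 1 → ‖g b - g a‖ ≤ D * ω a b ^ θ := by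
      intro a b ha hab hb1
      have h1 := hC₁ a b ha hab hb1
      have h2 := hC₂ a b ha hab hb1
      have he : g b - g a = (ψ₁ b - ψ₁ a - μ b a) - (ψ₂ b - ψ₂ a - μ b a) := by
        rw [hgdef]; beta_reduce; abel
      rw [he]
      refine (norm_sub_le _ _).trans ?_
      have hpow : 0 ≤ ω a b ^ θ := Real.rpow_nonneg (hω_nonneg a b ha hab hb1) θ
      have : (C₁ + C₂) * ω a b ^ θ ≤ D * ω a b ^ θ :=
        mul_le_mul_of_nonneg_right (le_max_left _ _) hpow
      linarith
    have hω01 : 0 ≤ ω 0 1 := hω_nonneg 0 1 le_rfl zero_le_one le_rfl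
    have hkey : ∀ ε > 0, ‖g t - g 0‖ ≤ ε := by
      intro ε hε
      have hA : 0 < (D + 1) * (ω 0 1 + 1) := by positivity
      obtain ⟨x, hx, hxlt⟩ := hpick _ ε hA hε
      obtain ⟨m₀, hm₀⟩ := hstep x hx
      have htel : g t - g 0 = ∑ i ∈ range (2 ^ m₀),
          (g (pt 0 t m₀ (i + 1)) - g (pt 0 t m₀ i)) := by
        rw [Finset.sum_range_sub (fun i => g (pt 0 t m₀ i))]
        rw [pt_last h0t ht1, pt_zero le_rfl h0t]
      rw [htel]
      refine (norm_sum_le _ _).trans ?_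
      have hsum1 : ∑ i ∈ range (2 ^ m₀), ‖g (pt 0 t m₀ (i + 1)) - g (pt 0 t m₀ i)‖
          ≤ ∑ i ∈ range (2 ^ m₀), D * ω (pt 0 t m₀ i) (pt 0 t m₀ (i + 1)) ^ θ := by
        refine Finset.sum_le_sum ?_
        intro i _
        exact hginc _ _ ((le_refl 0).trans (pt_ge h0t m₀ i)) (pt_mono 0 t m₀ (by omega))
          ((pt_le 0 t m₀ (i + 1)).trans ht1)
      refine hsum1.trans ?_
      rw [← Finset.mul_sum]
      have hsum2 : ∑ i ∈ range (2 ^ m₀), ω (pt 0 t m₀ i) (pt 0 t m₀ (i + 1)) ^ θ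
          ≤ x ^ (θ - 1) * ω 0 t := by
        have := sum_rpow_le θ hθ ω hω_nonneg hω_super (2 ^ m₀) (pt 0 t m₀) (pt_mono 0 t m₀)
          (by rw [pt_zero le_rfl h0t]) (by rw [pt_last h0t ht1]; exact ht1)
          x hx.le (fun j _ => hm₀ m₀ le_rfl 0 t le_rfl h0t ht1 j)
        rwa [pt_zero le_rfl h0t, pt_last h0t ht1] at this
      have hωt : ω 0 t ≤ ω 0 1 :=
        SewingAux.omega_mono ω hω_nonneg hω_super le_rfl le_rfl h0t ht1 le_rfl
      have hxp : 0 ≤ x ^ (θ - 1) := Real.rpow_nonneg hx.le _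
      have hω0t : 0 ≤ ω 0 t := hω_nonneg 0 t le_rfl h0t ht1
      calc D * ∑ i ∈ range (2 ^ m₀), ω (pt 0 t m₀ i) (pt 0 t m₀ (i + 1)) ^ θ
          ≤ D * (x ^ (θ - 1) * ω 0 t) := mul_le_mul_of_nonneg_left hsum2 hDnn
        _ = (D * ω 0 t) * x ^ (θ - 1) := by ring
        _ ≤ ((D + 1) * (ω 0 1 + 1)) * x ^ (θ - 1) := by
            refine mul_le_mul_of_nonneg_right ?_ hxp
            nlinarith [mul_le_mul_of_nonneg_left hωt hDnn]
        _ ≤ ε := hxlt.le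
    have hg0 : g 0 = 0 := by rw [hgdef]; simp [h10, h20]
    have hnz : ‖g t - g 0‖ = 0 := by
      by_contra hne
      have hpos : 0 < ‖g t - g 0‖ := lt_of_le_of_ne (norm_nonneg _) (Ne.symm hne)
      have := hkey (‖g t - g 0‖ / 2) (by positivity)
      linarith
    have h5 : g t - g 0 = 0 := norm_eq_zero.mp hnz
    rw [hg0, sub_zero] at h5
    exact sub_eq_zero.mp h5
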